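/- Let f, g : Ω → ℝ be C² functions on an open set Ω ⊆ ℝ² satisfying the Cauchy–Riemann equations f_x = g_y and f_y = -g_x. Then (f,g) solves the minimal surface system: with E = 1 + f_x² + g_x², F = f_x f_y + g_x g_y, G = 1 + f_y² + g_y², one has G·f_xx - 2F·f_xy + E·f_yy = 0 and G·g_xx - 2F·g_xy + E·g_yy = 0. -/

import Mathlib

noncomputable def pdx {E : Type*} [NormedAddCommGroup E] [NormedSpace ℝ E]
    (f : ℝ × ℝ → E) : ℝ × ℝ → E := fun p => fderiv ℝ f p (1, 0)

noncomputable def pdy {E : Type*} [NormedAddCommGroup E] [NormedSpace ℝ E]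
    (f : ℝ × ℝ → E) : ℝ × ℝ → E := fun p => fderiv ℝ f p (0, 1)

noncomputable def Ec (f g : ℝ × ℝ → ℝ) : ℝ × ℝ → ℝ :=
  fun p => 1 + (pdx f p) ^ 2 + (pdx g p) ^ 2

noncomputable def Fc (f g : ℝ × ℝ → ℝ) : ℝ × ℝ → ℝ :=
  fun p => pdx f p * pdy f p + pdx g p * pdy g p

noncomputable def Gc (f g : ℝ × ℝ → ℝ) : ℝ × ℝ → ℝ :=
  fun p => 1 + (pdy f p) ^ 2 + (pdy g p) ^ 2

noncomputable def om (f g : ℝ × ℝ → ℝ) : ℝ × ℝ → ℝ :=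
  fun p => Real.sqrt (Ec f g p * Gc f g p - (Fc f g p) ^ 2)

noncomputable def Wg (p : ℝ × ℝ → ℝ) : ℝ × ℝ → ℝ :=
  fun v => Real.sqrt (1 + (pdx p v) ^ 2 + (pdy p v) ^ 2)

theorem stmt_0 (Ω : Set (ℝ × ℝ)) (hΩ : IsOpen Ω) (f g : ℝ × ℝ → ℝ)
    (hf : ContDiffOn ℝ 2 f Ω) (hg : ContDiffOn ℝ 2 g Ω)
    (hCR : ∀ p ∈ Ω, pdx f p = pdy g p ∧ pdy f p = -pdx g p) :
    ∀ p ∈ Ω,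
      Gc f g p * pdx (pdx f) p - 2 * Fc f g p * pdy (pdx f) p + Ec f g p * pdy (pdy f) p = 0 ∧
      Gc f g p * pdx (pdx g) p - 2 * Fc f g p * pdy (pdx g) p + Ec f g p * pdy (pdy g) p = 0 := by

  intro p hp
  have hmem := hΩ.mem_nhds hp
  have hfp : ContDiffAt ℝ 2 f p := hf.contDiffAt hmem
  have hgp : ContDiffAt ℝ 2 g p := hg.contDiffAt hmem
  have hf' : DifferentiableAt ℝ (fderiv ℝ f) p :=
    (hfp.fderiv_right (m := 1) (by norm_num)).differentiableAt one_ne_zero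
  have hg' : DifferentiableAt ℝ (fderiv ℝ g) p :=
    (hgp.fderiv_right (m := 1) (by norm_num)).differentiableAt one_ne_zero
  have key : ∀ (h : ℝ × ℝ → ℝ), DifferentiableAt ℝ (fderiv ℝ h) p → ∀ v w : ℝ × ℝ,
      fderiv ℝ (fun q => fderiv ℝ h q v) p w = fderiv ℝ (fderiv ℝ h) p w v := by
    intro h hh v w
    have := fderiv_clm_apply (c := fderiv ℝ h) (u := fun _ => v) hh (differentiableAt_const v)
    simp [this]
  have e1 : pdx f =ᶠ[nhds p] pdy g :=
    Filter.eventually_of_mem hmem (fun q hq => (hCR q hq).1)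
  have e2 : pdy f =ᶠ[nhds p] fun q => -pdx g q :=
    Filter.eventually_of_mem hmem (fun q hq => (hCR q hq).2)
  have d1 : fderiv ℝ (pdx f) p = fderiv ℝ (pdy g) p := e1.fderiv_eq
  have d2 : fderiv ℝ (pdy f) p = fderiv ℝ (fun q => -pdx g q) p := e2.fderiv_eq
  have hsf : fderiv ℝ (fderiv ℝ f) p (1, 0) (0, 1) = fderiv ℝ (fderiv ℝ f) p (0, 1) (1, 0) :=
    (hfp.isSymmSndFDerivAt (by norm_num)) _ _
  have hsg : fderiv ℝ (fderiv ℝ g) p (1, 0) (0, 1) = fderiv ℝ (fderiv ℝ g) p (0, 1) (1, 0) :=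
    (hgp.isSymmSndFDerivAt (by norm_num)) _ _
  have hx : pdx f p = pdy g p := (hCR p hp).1
  have hy : pdy f p = -pdx g p := (hCR p hp).2
  have hEG : Ec f g p = Gc f g p := by simp only [Ec, Gc, hx, hy]; ring
  have hF : Fc f g p = 0 := by simp only [Fc, hx, hy]; ring
  have hfxx : pdx (pdx f) p = fderiv ℝ (fderiv ℝ g) p (1, 0) (0, 1) :=
    calc pdx (pdx f) p = fderiv ℝ (pdx f) p (1, 0) := rfl
      _ = fderiv ℝ (pdy g) p (1, 0) := by rw [d1]
      _ = fderiv ℝ (fderiv ℝ g) p (1, 0) (0, 1) := key g hg' (0, 1) (1, 0)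
  have hfyy : pdy (pdy f) p = -(fderiv ℝ (fderiv ℝ g) p (0, 1) (1, 0)) :=
    calc pdy (pdy f) p = fderiv ℝ (pdy f) p (0, 1) := rfl
      _ = fderiv ℝ (fun q => -pdx g q) p (0, 1) := by rw [d2]
      _ = -(fderiv ℝ (pdx g) p (0, 1)) := by rw [fderiv_fun_neg]; simp
      _ = -(fderiv ℝ (fderiv ℝ g) p (0, 1) (1, 0)) := congrArg Neg.neg (key g hg' (1, 0) (0, 1))
  have hfsum : pdx (pdx f) p + pdy (pdy f) p = 0 := by rw [hfxx, hfyy, hsg]; ring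
  have e2' : pdx g =ᶠ[nhds p] fun q => -pdy f q := by
    filter_upwards [e2] with q hq
    simp [hq]
  have d3 : fderiv ℝ (pdx g) p = fderiv ℝ (fun q => -pdy f q) p := e2'.fderiv_eq
  have d4 : fderiv ℝ (pdy g) p = fderiv ℝ (pdx f) p := d1.symm
  have hgxx : pdx (pdx g) p = -(fderiv ℝ (fderiv ℝ f) p (1, 0) (0, 1)) :=
    calc pdx (pdx g) p = fderiv ℝ (pdx g) p (1, 0) := rfl
      _ = fderiv ℝ (fun q => -pdy f q) p (1, 0) := by rw [d3]
      _ = -(fderiv ℝ (pdy f) p (1, 0)) := by rw [fderiv_fun_neg]; simp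
      _ = -(fderiv ℝ (fderiv ℝ f) p (1, 0) (0, 1)) := congrArg Neg.neg (key f hf' (0, 1) (1, 0))
  have hgyy : pdy (pdy g) p = fderiv ℝ (fderiv ℝ f) p (0, 1) (1, 0) :=
    calc pdy (pdy g) p = fderiv ℝ (pdy g) p (0, 1) := rfl
      _ = fderiv ℝ (pdx f) p (0, 1) := by rw [d4]
      _ = fderiv ℝ (fderiv ℝ f) p (0, 1) (1, 0) := key f hf' (1, 0) (0, 1)
  have hgsum : pdx (pdx g) p + pdy (pdy g) p = 0 := by rw [hgxx, hgyy, hsf]; ring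
  constructor
  · rw [hF, ← hEG]
    linear_combination Ec f g p * hfsum
  · rw [hF, ← hEG]
    linear_combination Ec f g p * hgsum
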